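/- Let n be a positive natural number and let G be the standard Gaussian measure on ℝⁿ, i.e., the n-fold product of the real Gaussian measure with mean 0 and variance 1. Then the pushforward of G under the map x ↦ ∑_{i=1}^n x_i² is the Gamma distribution with shape parameter n/2 and rate parameter 1/2 (the chi-squared distribution with n degrees of freedom). -/

import Mathlib

open MeasureTheory ProbabilityTheory

open Real Set
open scoped ENNReal NNReal

/-- 1D change of variables for the Lebesgue integral. -/
lemma my_lintegral_cov {s : Set ℝ} {f f' : ℝ → ℝ} (hs : MeasurableSet s)
    (hf' : ∀ x ∈ s, HasDerivWithinAt f (f' x) s x) (hf : Set.InjOn f s) (g : ℝ → ℝ≥0∞) :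
    ∫⁻ x in f '' s, g x = ∫⁻ x in s, ENNReal.ofReal |f' x| * g (f x) := by
  simpa only [ContinuousLinearMap.det_toSpanSingleton] using
    lintegral_image_eq_lintegral_abs_det_fderiv_mul volume hs
      (fun x hx => (hf' x hx).hasFDerivWithinAt) hf g

/-- The real Beta integral. -/
lemma my_beta {a b : ℝ} (ha : 0 < a) (hb : 0 < b) :
    ∫ t in (0:ℝ)..1, t ^ (a - 1) * (1 - t) ^ (b - 1) =
      Real.Gamma a * Real.Gamma b / Real.Gamma (a + b) := by
  have key := Complex.Gamma_mul_Gamma_eq_betaIntegral (s := (a : ℂ)) (t := (b : ℂ))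
    (by simpa using ha) (by simpa using hb)
  have hco : Complex.betaIntegral (a : ℂ) (b : ℂ) =
      ((∫ t in (0:ℝ)..1, t ^ (a - 1) * (1 - t) ^ (b - 1) : ℝ) : ℂ) := by
    rw [Complex.betaIntegral, ← intervalIntegral.integral_ofReal]
    refine intervalIntegral.integral_congr fun x hx => ?_
    rw [Set.uIcc_of_le zero_le_one] at hx
    have h1 : (0:ℝ) ≤ x := hx.1
    have h2 : (0:ℝ) ≤ 1 - x := by linarith [hx.2]
    rw [Complex.ofReal_mul, Complex.ofReal_cpow h1, Complex.ofReal_cpow h2]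
    push_cast
    ring
  rw [hco, ← Complex.ofReal_add, Complex.Gamma_ofReal, Complex.Gamma_ofReal,
    Complex.Gamma_ofReal, ← Complex.ofReal_mul, ← Complex.ofReal_mul] at key
  have := Complex.ofReal_injective key
  have hG : Real.Gamma (a + b) ≠ 0 := (Real.Gamma_pos_of_pos (by linarith)).ne'
  field_simp
  linarith [this]


lemma gaussianPDF_even (x : ℝ) : gaussianPDF 0 1 (-x) = gaussianPDF 0 1 x := by
  simp [gaussianPDF, gaussianPDFReal, neg_sq]

lemma map_sq_gaussian :
    Measure.map (fun x : ℝ => x ^ 2) (gaussianReal 0 1) = gammaMeasure (1/2) (1/2) := by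
  have hmeas : Measurable fun x : ℝ => x ^ 2 := measurable_id.pow_const 2
  have hFmeas : Measurable fun x : ℝ =>
      ENNReal.ofReal |1 / (2 * Real.sqrt x)| * gaussianPDF 0 1 (Real.sqrt x) :=
    ((measurable_const.div ((Real.continuous_sqrt.measurable).const_mul 2)).abs.ennreal_ofReal).mul
      ((measurable_gaussianPDF 0 1).comp Real.continuous_sqrt.measurable)
  ext A hA
  rw [Measure.map_apply hmeas hA, gaussianReal_apply 0 one_ne_zero, gammaMeasure,
    withDensity_apply _ hA]
  set P := (fun x : ℝ => x ^ 2) ⁻¹' A with hPdef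
  have hP : MeasurableSet P := hmeas hA
  -- split the integral over P into negative and positive parts
  have hPU : (P : Set ℝ) =ᵐ[(volume : Measure ℝ)] (((P ∩ Iio 0) ∪ (P ∩ Ioi 0)) : Set ℝ) := by
    rw [MeasureTheory.ae_eq_set]
    constructor
    · refine measure_mono_null (fun x hx => ?_) (measure_singleton (0:ℝ))
      rcases hx with ⟨hx1, hx2⟩
      simp only [mem_union, mem_inter_iff, not_or, not_and] at hx2
      have h1 := hx2.1 hx1
      have h2 := hx2.2 hx1
      simp only [mem_Iio, mem_Ioi, not_lt] at h1 h2
      have hx0 : x = 0 := le_antisymm h2 h1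
      simp [hx0]
    · have h1 : (((P ∩ Iio 0) ∪ (P ∩ Ioi 0)) : Set ℝ) ⊆ P :=
        union_subset inter_subset_left inter_subset_left
      rw [Set.diff_eq_empty.mpr h1]
      simp
  have hsplit : ∫⁻ x in P, gaussianPDF 0 1 x =
      (∫⁻ x in P ∩ Iio 0, gaussianPDF 0 1 x) + ∫⁻ x in P ∩ Ioi 0, gaussianPDF 0 1 x := by
    rw [setLIntegral_congr hPU, lintegral_union (hP.inter measurableSet_Ioi)]
    exact Set.disjoint_left.mpr fun x hx hx' => absurd (hx.2.trans (mem_Ioi.mp hx'.2)) (lt_irrefl _)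
  -- the negative part equals the positive part
  have hneg : ∫⁻ x in P ∩ Iio 0, gaussianPDF 0 1 x = ∫⁻ x in P ∩ Ioi 0, gaussianPDF 0 1 x := by
    have hset : Neg.neg ⁻¹' (P ∩ Ioi 0) = P ∩ Iio 0 := by
      ext x
      simp only [mem_preimage, mem_inter_iff, mem_Ioi, mem_Iio, hPdef, mem_preimage, neg_sq]
      constructor
      · rintro ⟨h1, h2⟩; exact ⟨h1, by linarith⟩
      · rintro ⟨h1, h2⟩; exact ⟨h1, by linarith⟩
    calc ∫⁻ x in P ∩ Iio 0, gaussianPDF 0 1 x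
        = ∫⁻ x in Neg.neg ⁻¹' (P ∩ Ioi 0), gaussianPDF 0 1 (-x) := by
          rw [hset]
          exact setLIntegral_congr_fun_ae (hP.inter measurableSet_Iio)
            (ae_of_all _ fun x _ => (gaussianPDF_even x).symm)
      _ = ∫⁻ x in P ∩ Ioi 0, gaussianPDF 0 1 x := by
          rw [← setLIntegral_map (hP.inter measurableSet_Ioi)
            (measurable_gaussianPDF 0 1) measurable_neg,
            Measure.map_neg_eq_self (volume : Measure ℝ)]
  -- change of variables on the positive part
  have himg : P ∩ Ioi 0 = Real.sqrt '' (A ∩ Ioi 0) := by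
    ext x
    simp only [mem_inter_iff, mem_Ioi, mem_image, hPdef, mem_preimage]
    constructor
    · rintro ⟨h1, h2⟩
      exact ⟨x ^ 2, ⟨h1, by positivity⟩, by rw [Real.sqrt_sq h2.le]⟩
    · rintro ⟨y, ⟨hy1, hy2⟩, rfl⟩
      rw [sq_sqrt hy2.le]
      exact ⟨hy1, Real.sqrt_pos.mpr hy2⟩
  have hcov : ∫⁻ x in P ∩ Ioi 0, gaussianPDF 0 1 x =
      ∫⁻ x in A ∩ Ioi 0,
        ENNReal.ofReal |1 / (2 * Real.sqrt x)| * gaussianPDF 0 1 (Real.sqrt x) := by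
    rw [himg]
    exact my_lintegral_cov (hA.inter measurableSet_Ioi)
      (fun x hx => (Real.hasDerivAt_sqrt hx.2.ne').hasDerivWithinAt)
      (fun x hx y hy h => by rwa [Real.sqrt_inj hx.2.le hy.2.le] at h)
      (gaussianPDF 0 1)
  rw [hsplit, hneg, hcov, ← lintegral_add_left hFmeas]
  -- now compare with the Gamma pdf on A
  rw [← lintegral_inter_add_diff (gammaPDF (1/2) (1/2)) A measurableSet_Ioi]
  have hdiff : ∫⁻ x in A \ Ioi 0, gammaPDF (1/2) (1/2) x = 0 := by
    rw [setLIntegral_congr_fun_ae (hA.diff measurableSet_Ioi)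
      (ae_of_all _ fun x hx => ?_), lintegral_zero]
    have hx0 : x ≤ 0 := by simpa using hx.2
    rcases lt_or_eq_of_le hx0 with h | h
    · exact gammaPDF_of_neg h
    · rw [h, gammaPDF_of_nonneg le_rfl]
      norm_num [Real.zero_rpow]
  rw [hdiff, add_zero]
  refine setLIntegral_congr_fun_ae (hA.inter measurableSet_Ioi) (ae_of_all _ fun x hx => ?_)
  have hx0 : 0 < x := hx.2
  have hsx : 0 < Real.sqrt x := Real.sqrt_pos.mpr hx0
  rw [← two_mul, gaussianPDF, gammaPDF_of_nonneg hx0.le, ← ENNReal.ofReal_mul (by positivity),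
    ← ENNReal.ofReal_ofNat, ← ENNReal.ofReal_mul (by norm_num)]
  congr 1
  rw [gaussianPDFReal]
  have h1 : -(Real.sqrt x - 0) ^ 2 / (2 * ((1:ℝ≥0):ℝ)) = -(1/2 * x) := by
    rw [sub_zero, sq_sqrt hx0.le]; push_cast; ring
  have h2 : Real.Gamma (1/2 : ℝ) = Real.sqrt π := Real.Gamma_one_half_eq
  have h3 : ((1:ℝ)/2) ^ ((1:ℝ)/2) = Real.sqrt (1/2) := (Real.sqrt_eq_rpow _).symm
  have h4 : x ^ ((1:ℝ)/2 - 1) = (Real.sqrt x)⁻¹ := by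
    rw [show (1:ℝ)/2 - 1 = -(1/2) by ring, Real.rpow_neg hx0.le, ← Real.sqrt_eq_rpow]
  have h5 : Real.sqrt (2 * π * ((1:ℝ≥0):ℝ)) = Real.sqrt 2 * Real.sqrt π := by
    push_cast
    rw [mul_one, Real.sqrt_mul (by norm_num)]
  have h6 : Real.sqrt (1/2 : ℝ) = (Real.sqrt 2)⁻¹ := by
    rw [one_div, Real.sqrt_inv]
  have hs2 : (0:ℝ) < Real.sqrt 2 := Real.sqrt_pos.mpr (by norm_num)
  have hsp : (0:ℝ) < Real.sqrt π := Real.sqrt_pos.mpr Real.pi_pos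
  rw [h1, h2, h3, h4, h5, h6, abs_of_pos (by positivity)]
  field_simp

lemma my_beta_integrable {a b : ℝ} (ha : 0 < a) (hb : 0 < b) :
    IntegrableOn (fun t : ℝ => t ^ (a - 1) * (1 - t) ^ (b - 1)) (Ioo 0 1) := by
  have h := Complex.betaIntegral_convergent (u := (a : ℂ)) (v := (b : ℂ))
    (by simpa using ha) (by simpa using hb)
  have h2 : IntegrableOn (fun x : ℝ => (x : ℂ) ^ ((a : ℂ) - 1) * ((1 : ℂ) - x) ^ ((b : ℂ) - 1))
      (Ioc 0 1) := by
    rw [← intervalIntegrable_iff_integrableOn_Ioc_of_le zero_le_one]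
    exact h
  have h3 : IntegrableOn
      (fun x : ℝ => ((x : ℂ) ^ ((a : ℂ) - 1) * ((1 : ℂ) - x) ^ ((b : ℂ) - 1)).re) (Ioc 0 1) :=
    h2.re
  refine (h3.congr_fun (fun x hx => ?_) measurableSet_Ioc).mono_set Ioo_subset_Ioc_self
  have h1 : (0:ℝ) ≤ x := hx.1.le
  have hx2 : (0:ℝ) ≤ 1 - x := by linarith [hx.2]
  have : ((x : ℂ) ^ ((a : ℂ) - 1) * ((1 : ℂ) - x) ^ ((b : ℂ) - 1)) =
      ((x ^ (a - 1) * (1 - x) ^ (b - 1) : ℝ) : ℂ) := by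
    rw [Complex.ofReal_mul, Complex.ofReal_cpow h1, Complex.ofReal_cpow hx2]
    push_cast
    ring
  rw [this, Complex.ofReal_re]

lemma my_beta_lintegral {a b : ℝ} (ha : 0 < a) (hb : 0 < b) :
    ∫⁻ t in Ioo (0:ℝ) 1, ENNReal.ofReal (t ^ (a - 1) * (1 - t) ^ (b - 1)) =
      ENNReal.ofReal (Real.Gamma a * Real.Gamma b / Real.Gamma (a + b)) := by
  rw [← ofReal_integral_eq_lintegral_ofReal (my_beta_integrable ha hb)
    ((ae_restrict_iff' measurableSet_Ioo).mpr (ae_of_all _ fun x hx =>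
      mul_nonneg (Real.rpow_nonneg hx.1.le _) (Real.rpow_nonneg (by linarith [hx.2]) _)))]
  rw [← my_beta ha hb, intervalIntegral.integral_of_le zero_le_one,
    MeasureTheory.integral_Ioc_eq_integral_Ioo]

lemma gammaPDF_conv {a b r : ℝ} (ha : 0 < a) (hb : 0 < b) (hr : 0 < r) {z : ℝ} (hz : z ≠ 0) :
    ∫⁻ x, gammaPDF a r x * gammaPDF b r (z - x) = gammaPDF (a + b) r z := by
  rcases lt_or_gt_of_ne hz with hz | hz
  · -- z < 0 : both sides vanish
    rw [gammaPDF_of_neg hz]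
    rw [← lintegral_zero (μ := (volume : Measure ℝ))]
    refine lintegral_congr_ae (ae_of_all _ fun x => ?_)
    show gammaPDF a r x * gammaPDF b r (z - x) = 0
    rcases lt_or_ge x 0 with h | h
    · rw [gammaPDF_of_neg h, zero_mul]
    · rw [gammaPDF_of_neg (by linarith : z - x < 0), mul_zero]
  · -- z > 0
    have hzero : ∀ᵐ x ∂(volume : Measure ℝ), x ∉ Ioo 0 z →
        gammaPDF a r x * gammaPDF b r (z - x) = 0 := by
      filter_upwards [compl_mem_ae_iff.mpr (measure_singleton (0:ℝ)),
        compl_mem_ae_iff.mpr (measure_singleton z)] with x hx0 hxz hx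
      simp only [mem_Ioo, not_and, not_lt] at hx
      rcases lt_trichotomy x 0 with h | h | h
      · rw [gammaPDF_of_neg h, zero_mul]
      · exact absurd h hx0
      · have := hx h
        rcases lt_or_eq_of_le this with h2 | h2
        · rw [gammaPDF_of_neg (by linarith : z - x < 0), mul_zero]
        · exact absurd h2.symm hxz
    rw [← lintegral_add_compl _ (measurableSet_Ioo (a := (0:ℝ)) (b := z)),
      setLIntegral_congr_fun_ae (measurableSet_Ioo (a := (0:ℝ)) (b := z)).compl
        (hzero.mono fun x h (hx : x ∈ (Ioo 0 z)ᶜ) => h hx), lintegral_zero, add_zero]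
    -- on (0, z) everything is positive; substitute x = z t
    have himg : Ioo (0:ℝ) z = (fun t => z * t) '' Ioo 0 1 := by
      ext x
      simp only [mem_Ioo, mem_image]
      constructor
      · rintro ⟨h1, h2⟩
        exact ⟨x / z, ⟨by positivity, by rw [div_lt_one hz]; exact h2⟩, by field_simp⟩
      · rintro ⟨t, ⟨ht1, ht2⟩, rfl⟩
        constructor
        · positivity
        · nlinarith
    have hGa : (0:ℝ) < Real.Gamma a := Real.Gamma_pos_of_pos ha
    have hGb : (0:ℝ) < Real.Gamma b := Real.Gamma_pos_of_pos hb
    have hGab : (0:ℝ) < Real.Gamma (a + b) := Real.Gamma_pos_of_pos (by linarith)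
    have hra : (0:ℝ) < r ^ a := Real.rpow_pos_of_pos hr a
    have hrb : (0:ℝ) < r ^ b := Real.rpow_pos_of_pos hr b
    have hCpos : (0:ℝ) ≤ r ^ a / Real.Gamma a * (r ^ b / Real.Gamma b) * Real.exp (-(r * z)) := by
      positivity
    calc ∫⁻ x in Ioo 0 z, gammaPDF a r x * gammaPDF b r (z - x)
        = ∫⁻ x in Ioo 0 z, ENNReal.ofReal
            ((r ^ a / Real.Gamma a * (r ^ b / Real.Gamma b) * Real.exp (-(r * z))) *
              (x ^ (a - 1) * (z - x) ^ (b - 1))) := by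
          refine setLIntegral_congr_fun_ae measurableSet_Ioo (ae_of_all _ fun x hx => ?_)
          rw [gammaPDF_of_nonneg hx.1.le, gammaPDF_of_nonneg (by linarith [hx.2] : (0:ℝ) ≤ z - x),
            ← ENNReal.ofReal_mul (mul_nonneg (mul_nonneg (div_nonneg hra.le hGa.le)
              (Real.rpow_nonneg hx.1.le _)) (Real.exp_nonneg _))]
          congr 1
          have hexp : Real.exp (-(r * x)) * Real.exp (-(r * (z - x))) = Real.exp (-(r * z)) := by
            rw [← Real.exp_add]; ring_nf
          calc r ^ a / Real.Gamma a * x ^ (a - 1) * Real.exp (-(r * x)) *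
                (r ^ b / Real.Gamma b * (z - x) ^ (b - 1) * Real.exp (-(r * (z - x))))
              = r ^ a / Real.Gamma a * (r ^ b / Real.Gamma b) *
                  (x ^ (a - 1) * (z - x) ^ (b - 1)) *
                  (Real.exp (-(r * x)) * Real.exp (-(r * (z - x)))) := by ring
            _ = _ := by rw [hexp]; ring
      _ = ∫⁻ t in Ioo (0:ℝ) 1, ENNReal.ofReal |z| * ENNReal.ofReal
            ((r ^ a / Real.Gamma a * (r ^ b / Real.Gamma b) * Real.exp (-(r * z))) *
              ((z * t) ^ (a - 1) * (z - z * t) ^ (b - 1))) := by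
          rw [himg]
          exact my_lintegral_cov (f := fun t => z * t) (f' := fun _ => z) measurableSet_Ioo
            (fun t _ => by simpa using ((hasDerivAt_id t).const_mul z).hasDerivWithinAt)
            (fun s hs t ht h => mul_left_cancel₀ hz.ne' h) _
      _ = ∫⁻ t in Ioo (0:ℝ) 1, ENNReal.ofReal
            (r ^ a / Real.Gamma a * (r ^ b / Real.Gamma b) * Real.exp (-(r * z)) *
              z ^ (a + b - 1))
            * ENNReal.ofReal (t ^ (a - 1) * (1 - t) ^ (b - 1)) := by
          refine setLIntegral_congr_fun_ae measurableSet_Ioo (ae_of_all _ fun t ht => ?_)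
          rw [abs_of_pos hz, ← ENNReal.ofReal_mul hz.le,
            ← ENNReal.ofReal_mul (by positivity)]
          congr 1
          have h1 : (z * t) ^ (a - 1) = z ^ (a - 1) * t ^ (a - 1) :=
            Real.mul_rpow hz.le ht.1.le
          have h2 : (z - z * t) ^ (b - 1) = z ^ (b - 1) * (1 - t) ^ (b - 1) := by
            rw [show z - z * t = z * (1 - t) by ring]
            exact Real.mul_rpow hz.le (by linarith [ht.2])
          have h3 : z * (z ^ (a - 1) * z ^ (b - 1)) = z ^ (a + b - 1) := by
            have he : a + b - 1 = 1 + ((a - 1) + (b - 1)) := by ring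
            rw [he, Real.rpow_add hz, Real.rpow_add hz, Real.rpow_one]
          rw [h1, h2]
          calc z * (r ^ a / Real.Gamma a * (r ^ b / Real.Gamma b) * Real.exp (-(r * z)) *
                (z ^ (a - 1) * t ^ (a - 1) * (z ^ (b - 1) * (1 - t) ^ (b - 1))))
              = (z * (z ^ (a - 1) * z ^ (b - 1))) *
                (r ^ a / Real.Gamma a * (r ^ b / Real.Gamma b) * Real.exp (-(r * z))) *
                (t ^ (a - 1) * (1 - t) ^ (b - 1)) := by ring
            _ = _ := by rw [h3]; ring
      _ = gammaPDF (a + b) r z := by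
          rw [lintegral_const_mul' _ _ ENNReal.ofReal_ne_top,
            my_beta_lintegral ha hb, ← ENNReal.ofReal_mul (by positivity),
            gammaPDF_of_nonneg hz.le]
          congr 1
          have hrab : r ^ (a + b) = r ^ a * r ^ b := Real.rpow_add hr a b
          rw [hrab]
          field_simp

lemma measurable_gammaPDF (a r : ℝ) : Measurable (gammaPDF a r) :=
  (measurable_gammaPDFReal a r).ennreal_ofReal

lemma gamma_conv {a b r : ℝ} (ha : 0 < a) (hb : 0 < b) (hr : 0 < r) :
    Measure.map (fun p : ℝ × ℝ => p.1 + p.2)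
      ((gammaMeasure a r).prod (gammaMeasure b r)) = gammaMeasure (a + b) r := by
  have hadd : Measurable fun p : ℝ × ℝ => p.1 + p.2 := measurable_fst.add measurable_snd
  have hga : Measurable (gammaPDF a r) := measurable_gammaPDF a r
  have hgb : Measurable (gammaPDF b r) := measurable_gammaPDF b r
  ext A hA
  rw [Measure.map_apply hadd hA]
  rw [show gammaMeasure (a + b) r = volume.withDensity (gammaPDF (a + b) r) from rfl,
    withDensity_apply _ hA]
  rw [show gammaMeasure a r = volume.withDensity (gammaPDF a r) from rfl,
    show gammaMeasure b r = volume.withDensity (gammaPDF b r) from rfl]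
  rw [Measure.prod_apply (hadd hA)]
  have hstep1 : ∀ x : ℝ, (volume.withDensity (gammaPDF b r))
      (Prod.mk x ⁻¹' ((fun p : ℝ × ℝ => p.1 + p.2) ⁻¹' A)) =
      ∫⁻ z in A, gammaPDF b r (z - x) := by
    intro x
    have hset : Prod.mk x ⁻¹' ((fun p : ℝ × ℝ => p.1 + p.2) ⁻¹' A) =
        (fun y => x + y) ⁻¹' A := rfl
    rw [hset, withDensity_apply _ (measurable_const_add x hA)]
    have key := setLIntegral_map (μ := (volume : Measure ℝ)) hA
      (f := fun z => gammaPDF b r (z - x)) (hgb.comp (measurable_id.sub_const x))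
      (measurable_const_add x)
    rw [MeasureTheory.Measure.IsAddLeftInvariant.map_add_left_eq_self (μ := (volume : Measure ℝ)) x] at key
    rw [key]
    refine setLIntegral_congr_fun_ae (measurable_const_add x hA)
      (ae_of_all _ fun y _ => ?_)
    simp
  simp_rw [hstep1]
  have hmeasinner : Measurable fun x : ℝ => ∫⁻ z in A, gammaPDF b r (z - x) := by
    refine Measurable.lintegral_prod_right (f := fun x z => gammaPDF b r (z - x)) ?_
    exact hgb.comp (measurable_snd.sub measurable_fst)
  rw [lintegral_withDensity_eq_lintegral_mul _ hga hmeasinner]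
  simp only [Pi.mul_apply]
  have hswap : ∫⁻ x, gammaPDF a r x * ∫⁻ z in A, gammaPDF b r (z - x) =
      ∫⁻ z in A, ∫⁻ x, gammaPDF a r x * gammaPDF b r (z - x) := by
    have h1 : ∀ x : ℝ, gammaPDF a r x * ∫⁻ z in A, gammaPDF b r (z - x) =
        ∫⁻ z in A, gammaPDF a r x * gammaPDF b r (z - x) := fun x =>
      (lintegral_const_mul _ (hgb.comp (measurable_id.sub_const x))).symm
    simp_rw [h1]
    exact lintegral_lintegral_swap
      ((hga.comp measurable_fst).mul
        (hgb.comp (measurable_snd.sub measurable_fst))).aemeasurable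
  rw [hswap]
  refine setLIntegral_congr_fun_ae hA ?_
  filter_upwards [compl_mem_ae_iff.mpr (measure_singleton (0:ℝ))] with z hz _
  exact gammaPDF_conv ha hb hr hz

lemma measurable_sum_sq (n : ℕ) : Measurable fun x : Fin n → ℝ => ∑ i, x i ^ 2 :=
  Finset.measurable_sum _ fun i _ => (measurable_pi_apply i).pow_const 2

lemma main_induction : ∀ n : ℕ,
    Measure.map (fun x : Fin (n + 1) → ℝ => ∑ i, x i ^ 2)
      (Measure.pi fun _ : Fin (n + 1) => gaussianReal 0 1) =
      gammaMeasure (((n : ℝ) + 1) / 2) (1 / 2) := by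
  intro n
  induction n with
  | zero =>
    have hfe : (fun x : Fin 1 → ℝ => ∑ i, x i ^ 2) =
        (fun y : ℝ => y ^ 2) ∘ (MeasurableEquiv.funUnique (Fin 1) ℝ) := by
      ext x
      simp [Fin.sum_univ_one, MeasurableEquiv.funUnique]
    rw [hfe, ← Measure.map_map (show Measurable fun y : ℝ => y ^ 2 by fun_prop)
      (MeasurableEquiv.funUnique (Fin 1) ℝ).measurable,
      show Measure.map (MeasurableEquiv.funUnique (Fin 1) ℝ) (Measure.pi fun _ : Fin 1 => gaussianReal 0 1) = gaussianReal 0 1 from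
        (measurePreserving_funUnique (gaussianReal 0 1) (Fin 1)).map_eq, map_sq_gaussian]
    norm_num
  | succ n ih =>
    set e := MeasurableEquiv.piFinSuccAbove (fun _ : Fin (n + 2) => ℝ) 0 with he
    have hmp := measurePreserving_piFinSuccAbove (fun _ : Fin (n + 2) => gaussianReal 0 1) 0
    have hcomp : (fun x : Fin (n + 2) → ℝ => ∑ i, x i ^ 2) =
        ((fun q : ℝ × ℝ => q.1 + q.2) ∘
          (Prod.map (fun y : ℝ => y ^ 2) (fun w : Fin (n + 1) → ℝ => ∑ j, w j ^ 2))) ∘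
          e := by
      ext x
      simp only [Function.comp_apply, Prod.map_apply, he,
        MeasurableEquiv.piFinSuccAbove_apply]
      rw [Fin.sum_univ_succ]
      simp [Fin.insertNthEquiv, Fin.succAbove_zero, Fin.tail]
    have hpi : Measure.map e (Measure.pi fun _ : Fin (n + 2) => gaussianReal 0 1) =
        (gaussianReal 0 1).prod (Measure.pi fun _ : Fin (n + 1) => gaussianReal 0 1) :=
      hmp.map_eq
    rw [hcomp, ← Measure.map_map (by fun_prop) e.measurable, hpi,
      ← Measure.map_map (show Measurable fun q : ℝ × ℝ => q.1 + q.2 by fun_prop)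
        (show Measurable
            (Prod.map (fun y : ℝ => y ^ 2) (fun w : Fin (n + 1) → ℝ => ∑ j, w j ^ 2)) from
          (show Measurable fun y : ℝ => y ^ 2 by fun_prop).prodMap (measurable_sum_sq (n + 1))),
      ← Measure.map_prod_map _ _ (show Measurable fun y : ℝ => y ^ 2 by fun_prop)
        (measurable_sum_sq (n + 1)),
      map_sq_gaussian, ih, gamma_conv (by norm_num) (by positivity) (by norm_num)]
    congr 1
    push_cast
    ring

/-- The squared Euclidean norm of a standard Gaussian vector in `ℝⁿ` is chi-squared
with `n` degrees of freedom, i.e., Gamma with shape `n/2` and rate `1/2`. -/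
theorem squared_norm_gaussian_is_chiSquared (n : ℕ) (hn : 0 < n) :
    Measure.map (fun x : Fin n → ℝ => ∑ i, x i ^ 2)
      (Measure.pi fun _ : Fin n => gaussianReal 0 1) =
      gammaMeasure ((n : ℝ) / 2) (1 / 2) := by
  obtain ⟨m, rfl⟩ := Nat.exists_eq_succ_of_ne_zero hn.ne'
  rw [main_induction m]
  congr 1
  push_cast
  ring
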